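/- With TPR_d(y) = 1 − Φ((y√(2d) − Δ²)/√(2d + 4Δ²)) and FPR(y) = 1 − Φ(y), the scaled gap √d·(TPR_d(y) − FPR(y)) converges to Δ²·φ(y)/√2 as d → ∞, where φ is the standard normal density. -/

import Mathlib

open Real Filter MeasureTheory

/-- The standard normal CDF. -/
noncomputable def stdNormalCDF (z : ℝ) : ℝ :=
  ∫ u in Set.Iic z, (1 / Real.sqrt (2 * Real.pi)) * Real.exp (-u ^ 2 / 2)

/-- The standard normal density. -/
noncomputable def stdNormalPDF (z : ℝ) : ℝ :=
  (1 / Real.sqrt (2 * Real.pi)) * Real.exp (-z ^ 2 / 2)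

lemma sqrt_tendsto_atTop' : Tendsto Real.sqrt atTop atTop := by
  rw [tendsto_atTop_atTop]
  intro b
  refine ⟨max 0 b ^ 2, fun a ha => ?_⟩
  calc b ≤ max 0 b := le_max_right _ _
    _ = Real.sqrt (max 0 b ^ 2) := (Real.sqrt_sq (le_max_left _ _)).symm
    _ ≤ Real.sqrt a := Real.sqrt_le_sqrt ha

lemma stdNormal_integrable :
    Integrable (fun u : ℝ => (1 / Real.sqrt (2 * Real.pi)) * Real.exp (-u ^ 2 / 2)) := by
  have h : Integrable (fun u : ℝ => Real.exp (-(1/2) * u ^ 2)) :=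
    integrable_exp_neg_mul_sq (by norm_num)
  have h2 : Integrable (fun u : ℝ => Real.exp (-u ^ 2 / 2)) := by
    convert h using 2 with u
    ring_nf
  exact h2.const_mul _

lemma stdNormalCDF_hasDerivAt (y : ℝ) : HasDerivAt stdNormalCDF (stdNormalPDF y) y := by
  set f : ℝ → ℝ := fun u => (1 / Real.sqrt (2 * Real.pi)) * Real.exp (-u ^ 2 / 2) with hf
  have hcont : Continuous f := by
    exact continuous_const.mul ((continuous_neg.comp (continuous_pow 2)).div_const 2).rexp
  have hint := stdNormal_integrable
  have heq : stdNormalCDF = fun z => (∫ u in Set.Iic (0:ℝ), f u) + ∫ u in (0:ℝ)..z, f u := by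
    funext z
    have h := intervalIntegral.integral_Iic_sub_Iic (a := (0:ℝ)) (b := z)
      hint.integrableOn hint.integrableOn
    rw [stdNormalCDF]
    rw [← h]
    ring
  rw [heq]
  have hd : HasDerivAt (fun z => ∫ u in (0:ℝ)..z, f u) (f y) y :=
    intervalIntegral.integral_hasDerivAt_right (hcont.intervalIntegrable 0 y)
      (hcont.stronglyMeasurableAtFilter _ _) hcont.continuousAt
  exact hd.const_add _

/-- with `TPR_d(y) = 1 − Φ((y√(2d) − Δ²)/√(2d + 4Δ²))` and
`FPR(y) = 1 − Φ(y)`, the scaled gap `√d·(TPR_d(y) − FPR(y))` converges to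
`Δ²·φ(y)/√2` as `d → ∞`. -/
theorem stmt_15 (y Δ : ℝ) :
    Tendsto (fun d : ℝ =>
        Real.sqrt d *
          ((1 - stdNormalCDF ((y * Real.sqrt (2 * d) - Δ ^ 2) / Real.sqrt (2 * d + 4 * Δ ^ 2))) -
            (1 - stdNormalCDF y)))
      atTop (nhds (Δ ^ 2 * stdNormalPDF y / Real.sqrt 2)) := by
  by_cases hΔ : Δ = 0
  · subst hΔ
    have h0 : ((0:ℝ) ^ 2 * stdNormalPDF y / Real.sqrt 2) = 0 := by norm_num
    rw [h0]
    apply Tendsto.congr' _ tendsto_const_nhds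
    filter_upwards [eventually_gt_atTop (0:ℝ)] with d hd
    have h2d : (0:ℝ) < 2 * d := by linarith
    have : (y * Real.sqrt (2 * d) - (0:ℝ) ^ 2) / Real.sqrt (2 * d + 4 * 0 ^ 2) = y := by
      rw [show (2 * d + 4 * (0:ℝ) ^ 2) = 2 * d by ring]
      rw [show (y * Real.sqrt (2 * d) - (0:ℝ) ^ 2) = y * Real.sqrt (2 * d) by ring]
      rw [mul_div_assoc, div_self (Real.sqrt_ne_zero'.mpr h2d), mul_one]
    rw [this]
    ring
  -- Main case : Δ ≠ 0
  set z : ℝ → ℝ := fun d => (y * Real.sqrt (2 * d) - Δ ^ 2) / Real.sqrt (2 * d + 4 * Δ ^ 2) with hz_def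
  set L : ℝ → ℝ := fun d =>
    4 * y * Δ ^ 2 * Real.sqrt (d / (2 * d + 4 * Δ ^ 2)) *
        (1 / (Real.sqrt (2 * d + 4 * Δ ^ 2) + Real.sqrt (2 * d))) +
      Δ ^ 2 * Real.sqrt (d / (2 * d + 4 * Δ ^ 2)) with hL_def
  have hΔ2 : 0 < Δ ^ 2 := by positivity
  -- limit of the ratio d / (2d + 4Δ²)
  have hr : Tendsto (fun d : ℝ => d / (2 * d + 4 * Δ ^ 2)) atTop (nhds (1 / 2)) := by
    have h1 : Tendsto (fun d : ℝ => 4 * Δ ^ 2 / d) atTop (nhds 0) :=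
      tendsto_const_nhds.div_atTop tendsto_id
    have h2 : Tendsto (fun d : ℝ => 1 / (2 + 4 * Δ ^ 2 / d)) atTop (nhds (1 / 2)) := by
      have hden : Tendsto (fun d : ℝ => 2 + 4 * Δ ^ 2 / d) atTop (nhds (2 + 0)) :=
        tendsto_const_nhds.add h1
      rw [add_zero] at hden
      have hone : Tendsto (fun _ : ℝ => (1:ℝ)) atTop (nhds 1) := tendsto_const_nhds
      exact hone.div hden (by norm_num)
    apply h2.congr'
    filter_upwards [eventually_gt_atTop (0:ℝ)] with d hd
    have hden : 2 * d + 4 * Δ ^ 2 ≠ 0 := by positivity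
    field_simp
  have hsq : Tendsto (fun d : ℝ => Real.sqrt (d / (2 * d + 4 * Δ ^ 2))) atTop
      (nhds (Real.sqrt (1 / 2))) := hr.sqrt
  -- the sum of square roots tends to infinity
  have hbt : Tendsto (fun d : ℝ => Real.sqrt (2 * d)) atTop atTop :=
    sqrt_tendsto_atTop'.comp (tendsto_id.const_mul_atTop (by norm_num))
  have hat : Tendsto (fun d : ℝ => Real.sqrt (2 * d + 4 * Δ ^ 2)) atTop atTop :=
    sqrt_tendsto_atTop'.comp ((tendsto_id.const_mul_atTop (by norm_num : (0:ℝ) < 2)).atTop_add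
      tendsto_const_nhds)
  have hinv : Tendsto (fun d : ℝ => 1 / (Real.sqrt (2 * d + 4 * Δ ^ 2) + Real.sqrt (2 * d)))
      atTop (nhds 0) := by
    simpa [one_div, Pi.inv_def] using (hat.atTop_add_atTop hbt).inv_tendsto_atTop
  -- limit of L
  have hLlim : Tendsto L atTop (nhds (Δ ^ 2 / Real.sqrt 2)) := by
    have c1 : Tendsto (fun _ : ℝ => 4 * y * Δ ^ 2) atTop (nhds (4 * y * Δ ^ 2)) :=
      tendsto_const_nhds
    have c2 : Tendsto (fun _ : ℝ => Δ ^ 2) atTop (nhds (Δ ^ 2)) := tendsto_const_nhds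
    have := ((c1.mul hsq).mul hinv).add (c2.mul hsq)
    have heval : 4 * y * Δ ^ 2 * Real.sqrt (1 / 2) * 0 + Δ ^ 2 * Real.sqrt (1 / 2)
        = Δ ^ 2 / Real.sqrt 2 := by
      rw [one_div, Real.sqrt_inv]
      ring
    rw [heval] at this
    exact this
  -- eventually √d (y - z d) = L d
  have hEq : ∀ᶠ d in atTop, Real.sqrt d * (y - z d) = L d := by
    filter_upwards [eventually_gt_atTop (0:ℝ)] with d hd
    set a := Real.sqrt (2 * d + 4 * Δ ^ 2) with hadef
    set b := Real.sqrt (2 * d) with hbdef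
    have hapos : 0 < a := Real.sqrt_pos.mpr (by positivity)
    have hbpos : 0 < b := Real.sqrt_pos.mpr (by positivity)
    have ha2 : a ^ 2 = 2 * d + 4 * Δ ^ 2 := Real.sq_sqrt (by positivity)
    have hb2 : b ^ 2 = 2 * d := Real.sq_sqrt (by positivity)
    have hratio : Real.sqrt (d / (2 * d + 4 * Δ ^ 2)) = Real.sqrt d / a := by
      rw [Real.sqrt_div hd.le]
    have habne : a + b ≠ 0 := by positivity
    simp only [hz_def, hL_def, hratio, ← hadef, ← hbdef]
    field_simp
    linear_combination y * ha2 - y * hb2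
  have hL : Tendsto (fun d : ℝ => Real.sqrt d * (y - z d)) atTop
      (nhds (Δ ^ 2 / Real.sqrt 2)) := hLlim.congr' (hEq.mono fun d h => h.symm)
  -- z d → y
  have hinvsqrt : Tendsto (fun d : ℝ => (Real.sqrt d)⁻¹) atTop (nhds 0) :=
    sqrt_tendsto_atTop'.inv_tendsto_atTop
  have hsub : Tendsto (fun d : ℝ => y - z d) atTop (nhds 0) := by
    have h := hL.mul hinvsqrt
    rw [mul_zero] at h
    apply h.congr'
    filter_upwards [eventually_gt_atTop (0:ℝ)] with d hd
    have hs : Real.sqrt d ≠ 0 := Real.sqrt_ne_zero'.mpr hd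
    field_simp
  have hz : Tendsto z atTop (nhds y) := by
    have h := hsub.const_sub y
    simpa using h
  -- eventually z d ≠ y
  have hne : ∀ᶠ d in atTop, z d ≠ y := by
    have hpos : (0:ℝ) < Δ ^ 2 / Real.sqrt 2 := by positivity
    filter_upwards [hL.eventually_const_lt hpos] with d hd heq
    rw [heq, sub_self, mul_zero] at hd
    exact lt_irrefl 0 hd
  -- slope tendsto
  have hz' : Tendsto z atTop (nhdsWithin y {y}ᶜ) :=
    tendsto_nhdsWithin_iff.mpr ⟨hz, hne.mono fun d h => by simpa using h⟩
  have hslope : Tendsto (fun d => slope stdNormalCDF y (z d)) atTop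
      (nhds (stdNormalPDF y)) :=
    (hasDerivAt_iff_tendsto_slope.mp (stdNormalCDF_hasDerivAt y)).comp hz'
  -- conclude
  have hmain := hslope.mul hL
  have hval : stdNormalPDF y * (Δ ^ 2 / Real.sqrt 2) = Δ ^ 2 * stdNormalPDF y / Real.sqrt 2 := by
    ring
  rw [hval] at hmain
  have key : ∀ w t : ℝ, slope stdNormalCDF y w * (t * (y - w)) =
      t * ((1 - stdNormalCDF w) - (1 - stdNormalCDF y)) := by
    intro w t
    by_cases h : w = y
    · rw [h]
      simp [slope_same]
    · have hne' : w - y ≠ 0 := sub_ne_zero.mpr h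
      rw [slope_def_field]
      field_simp
      ring
  apply hmain.congr
  intro d
  exact key (z d) (Real.sqrt d)
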